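/- arXiv:1602.02558 — 8 statements merged into one kernel-verified Lean document; each statement's English description precedes it below -/
import Mathlib

section
/- Let X be a real Banach space and (P_λ)_{λ∈Λ} a projectional skeleton on X such that sup_{λ∈Λ} ‖P_λ‖ = r for some r ∈ [1, ∞). Then the induced subspace D = ⋃_{λ∈Λ} P_λ*[X*] is an r-norming subspace of X*. -/
open Set Topology Filter

/-- A projectional skeleton on a Banach space `X`: a family of bounded linear projections
indexed by an up-directed partially ordered set `Λ`, satisfying conditions (i)-(iv). -/
structure IsProjSkeleton {X : Type*} [NormedAddCommGroup X] [NormedSpace ℝ X]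
    {Λ : Type*} [PartialOrder Λ] (P : Λ → X →L[ℝ] X) : Prop where
  /-- `Λ` is up-directed. -/
  directed : ∀ a b : Λ, ∃ c : Λ, a ≤ c ∧ b ≤ c
  /-- Each `P l` is a projection. -/
  idem : ∀ l : Λ, (P l).comp (P l) = P l
  /-- (i) The range of each `P l` is separable. -/
  sep : ∀ l : Λ, TopologicalSpace.IsSeparable (Set.range (P l) : Set X)
  /-- (ii) `P l ∘ P m = P l` whenever `l ≤ m`. -/
  comp_le : ∀ l m : Λ, l ≤ m → (P l).comp (P m) = P l
  /-- (ii) `P m ∘ P l = P l` whenever `l ≤ m`. -/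
  le_comp : ∀ l m : Λ, l ≤ m → (P m).comp (P l) = P l
  /-- (iii) Every increasing sequence in `Λ` has a supremum `s`, and the range of `P s` is the
  closure of the union of the ranges of the `P (l n)`. -/
  sup_seq : ∀ l : ℕ → Λ, Monotone l → ∃ s : Λ, IsLUB (Set.range l) s ∧
    (Set.range (P s) : Set X) = closure (⋃ n : ℕ, (Set.range (P (l n)) : Set X))
  /-- (iv) `X` is the union of the ranges. -/
  covers : ∀ x : X, ∃ l : Λ, x ∈ Set.range (P l)

/-- The subspace of `X*` induced by the skeleton: `D = ⋃ λ, P λ* [X*]`, where the adjoint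
`P λ*` maps `f` to `f ∘ P λ`. -/
def inducedSubspace {X : Type*} [NormedAddCommGroup X] [NormedSpace ℝ X]
    {Λ : Type*} (P : Λ → X →L[ℝ] X) : Set (StrongDual ℝ X) :=
  ⋃ l : Λ, Set.range (fun f : StrongDual ℝ X => f.comp (P l))

/-- A set `D ⊆ X*` is `r`-norming if `‖x‖ ≤ r * sup {|f x| : f ∈ D, ‖f‖ ≤ 1}` for all `x`. -/
def IsNorming {X : Type*} [NormedAddCommGroup X] [NormedSpace ℝ X]
    (D : Set (StrongDual ℝ X)) (r : ℝ) : Prop :=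
  ∀ x : X, ‖x‖ ≤ r * sSup {t : ℝ | ∃ f ∈ D, ‖f‖ ≤ 1 ∧ t = |f x|}

set_option maxHeartbeats 1000000 in
set_option synthInstance.maxHeartbeats 1000000 in
/-- If `(P λ)` is a projectional skeleton on `X` with `sup ‖P λ‖ = r ∈ [1, ∞)`, then the
induced subspace `D = ⋃ λ, P λ*[X*]` is `r`-norming. -/
theorem inducedSubspace_isNorming {X : Type*} [NormedAddCommGroup X] [NormedSpace ℝ X]
    [CompleteSpace X] {Λ : Type*} [PartialOrder Λ] (P : Λ → X →L[ℝ] X)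
    (hsk : IsProjSkeleton P) (r : ℝ) (hr : 1 ≤ r)
    (hsup : IsLUB (Set.range fun l : Λ => ‖P l‖) r) :
    IsNorming (inducedSubspace P) r := by
  intro x
  obtain ⟨l, y, hy⟩ := hsk.covers x
  have hPx : P l x = x := by
    rw [← hy]
    have := congrFun (congrArg (fun T : X →L[ℝ] X => (T : X → X)) (hsk.idem l)) y
    simpa using this
  have hr0 : (0:ℝ) < r := lt_of_lt_of_le one_pos hr
  obtain ⟨f, hf1, hfx⟩ := exists_dual_vector'' ℝ x
  set g : StrongDual ℝ X := (r⁻¹ • f).comp (P l) with hg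
  have hPl : ‖P l‖ ≤ r := hsup.1 ⟨l, rfl⟩
  have hgnorm : ‖g‖ ≤ 1 := by
    apply ContinuousLinearMap.opNorm_le_bound _ zero_le_one
    intro z
    have h1 : ‖g z‖ = r⁻¹ * ‖f (P l z)‖ := by
      simp [hg, ContinuousLinearMap.comp_apply, Real.norm_eq_abs, abs_mul,
        abs_of_pos (inv_pos.mpr hr0)]
      left; exact hr0.le
    have h2 : ‖f (P l z)‖ ≤ 1 * (‖P l‖ * ‖z‖) :=
      le_trans (f.le_opNorm _) (by
        exact mul_le_mul hf1 ((P l).le_opNorm z) (norm_nonneg _) zero_le_one)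
    have h3 : ‖P l‖ * ‖z‖ ≤ r * ‖z‖ := mul_le_mul_of_nonneg_right hPl (norm_nonneg _)
    calc ‖g z‖ = r⁻¹ * ‖f (P l z)‖ := h1
      _ ≤ r⁻¹ * (r * ‖z‖) := by
          apply mul_le_mul_of_nonneg_left _ (inv_nonneg.mpr hr0.le)
          linarith [h2, h3]
      _ = ‖z‖ := by field_simp
      _ ≤ 1 * ‖z‖ := by rw [one_mul]
  have hgD : g ∈ inducedSubspace P := Set.mem_iUnion.mpr ⟨l, ⟨r⁻¹ • f, rfl⟩⟩
  have hgval : g x = r⁻¹ * ‖x‖ := by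
    simp [hg, ContinuousLinearMap.comp_apply, hPx, hfx]
  have hgx : |g x| = r⁻¹ * ‖x‖ := by
    rw [hgval, abs_of_nonneg (by positivity)]
  have hmem : r⁻¹ * ‖x‖ ∈ {t : ℝ | ∃ f ∈ inducedSubspace P, ‖f‖ ≤ 1 ∧ t = |f x|} :=
    ⟨g, hgD, hgnorm, hgx.symm⟩
  have hbdd : BddAbove {t : ℝ | ∃ f ∈ inducedSubspace P, ‖f‖ ≤ 1 ∧ t = |f x|} := by
    refine ⟨‖x‖, ?_⟩
    rintro t ⟨h, _, hn, rfl⟩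
    calc |h x| = ‖h x‖ := (Real.norm_eq_abs _).symm
      _ ≤ ‖h‖ * ‖x‖ := h.le_opNorm x
      _ ≤ 1 * ‖x‖ := mul_le_mul_of_nonneg_right hn (norm_nonneg _)
      _ = ‖x‖ := one_mul _
  calc ‖x‖ = r * (r⁻¹ * ‖x‖) := by field_simp
    _ ≤ r * sSup {t : ℝ | ∃ f ∈ inducedSubspace P, ‖f‖ ≤ 1 ∧ t = |f x|} :=
        mul_le_mul_of_nonneg_left (le_csSup hbdd hmem) hr0.le
end

section
/- Let X be a real Banach space and (P_λ)_{λ∈Λ} a projectional skeleton on X satisfying moreover: (iii') for every increasing sequence (λ_n) in Λ with supremum λ ∈ Λ one has P_λ x = lim_{n→∞} P_{λ_n} x for every x ∈ X, and (v) sup_{λ∈Λ} ‖P_λ‖ < ∞. If the induced subspace D = ⋃_{λ∈Λ} P_λ*[X*] is r-norming for some r ≥ 1, then the set Λ' = {λ ∈ Λ : ‖P_λ‖ ≤ r} is a closed cofinal subset of Λ. -/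
open Set Topology Filter

section Aux

variable {X : Type*} [NormedAddCommGroup X] [NormedSpace ℝ X]
    {Λ : Type*} [PartialOrder Λ] {P : Λ → X →L[ℝ] X}

/-- From the `r`-norming property, extract an almost-norming functional for each point. -/
lemma aux_norming_extract (r : ℝ) (hr : 1 ≤ r)
    (hnorm : IsNorming (inducedSubspace P) r) (l0 : Λ) (x : X) {ε : ℝ} (hε : 0 < ε) :
    ∃ f ∈ inducedSubspace P, ‖f‖ ≤ 1 ∧ ‖x‖ ≤ r * |f x| + ε := by
  have hr0 : (0 : ℝ) < r := lt_of_lt_of_le zero_lt_one hr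
  set S : Set ℝ := {t : ℝ | ∃ f ∈ inducedSubspace P, ‖f‖ ≤ 1 ∧ t = |f x|} with hS
  have h0 : (0 : ℝ) ∈ S := by
    refine ⟨0, ?_, by simp, by simp⟩
    exact mem_iUnion.2 ⟨l0, ⟨0, by simp⟩⟩
  have hlt : sSup S - ε / r < sSup S := by
    have := div_pos hε hr0; linarith
  obtain ⟨t, htS, ht⟩ := exists_lt_of_lt_csSup ⟨0, h0⟩ hlt
  obtain ⟨f, hfD, hf1, rfl⟩ := htS
  refine ⟨f, hfD, hf1, ?_⟩
  have h1 : ‖x‖ ≤ r * sSup S := hnorm x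
  have h2 : sSup S < |f x| + ε / r := by linarith
  have h3 : r * sSup S ≤ r * (|f x| + ε / r) := by nlinarith
  have h4 : r * (|f x| + ε / r) = r * |f x| + ε := by field_simp
  linarith

/-- Any countable family in `Λ` has an upper bound. -/
lemma aux_countable_bound (hsk : IsProjSkeleton P) (μ : ℕ → Λ) :
    ∃ s : Λ, ∀ k : ℕ, μ k ≤ s := by
  let ν : ℕ → Λ := fun n => Nat.rec (μ 0) (fun k p => (hsk.directed p (μ (k + 1))).choose) n
  have hstep : ∀ n : ℕ, ν n ≤ ν (n + 1) ∧ μ (n + 1) ≤ ν (n + 1) := fun n =>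
    (hsk.directed (ν n) (μ (n + 1))).choose_spec
  have hmono : Monotone ν := monotone_nat_of_le_succ fun n => (hstep n).1
  obtain ⟨s, hs, -⟩ := hsk.sup_seq ν hmono
  have hνs : ∀ n, ν n ≤ s := fun n => hs.1 ⟨n, rfl⟩
  refine ⟨s, fun k => ?_⟩
  cases k with
  | zero => exact hνs 0
  | succ k => exact le_trans (hstep k).2 (hνs (k + 1))

/-- One-step construction: a bigger index capturing norming functionals for a countable
dense subset of the range of `P l0`. -/
lemma aux_step (hsk : IsProjSkeleton P) (r : ℝ) (hr : 1 ≤ r)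
    (hnorm : IsNorming (inducedSubspace P) r) (l0 : Λ) :
    ∃ l1 : Λ, l0 ≤ l1 ∧ ∃ u : ℕ → X,
      (Set.range (P l0) : Set X) ⊆ closure (Set.range u) ∧
      ∀ k m : ℕ, ∃ μ : Λ, ∃ g : StrongDual ℝ X, μ ≤ l1 ∧
        ‖g.comp (P μ)‖ ≤ 1 ∧ ‖u k‖ ≤ r * |g (P μ (u k))| + 1 / (m + 1) := by
  obtain ⟨c, hcc, hcs⟩ := hsk.sep l0
  obtain ⟨u, hu⟩ := (hcc.insert (0 : X)).exists_eq_range (insert_nonempty _ _)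
  have husub : (Set.range (P l0) : Set X) ⊆ closure (Set.range u) := by
    rw [← hu]
    exact hcs.trans (closure_mono (subset_insert _ _))
  have H : ∀ k m : ℕ, ∃ μ : Λ, ∃ g : StrongDual ℝ X,
      ‖g.comp (P μ)‖ ≤ 1 ∧ ‖u k‖ ≤ r * |g (P μ (u k))| + 1 / (m + 1) := by
    intro k m
    have hpos : (0 : ℝ) < 1 / (m + 1) := by positivity
    obtain ⟨f, hfD, hf1, hfx⟩ := aux_norming_extract r hr hnorm l0 (u k) hpos
    simp only [inducedSubspace, mem_iUnion, mem_range] at hfD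
    obtain ⟨μ, g, rfl⟩ := hfD
    exact ⟨μ, g, hf1, by simpa using hfx⟩
  choose μf gf h1 h2 using H
  obtain ⟨s, hs⟩ := aux_countable_bound hsk
    (fun n => Nat.casesOn n l0 (fun i => μf i.unpair.1 i.unpair.2))
  refine ⟨s, hs 0, u, husub, fun k m => ⟨μf k m, gf k m, ?_, h1 k m, h2 k m⟩⟩
  have := hs (Nat.pair k m + 1)
  simpa [Nat.unpair_pair] using this

end Aux

/-- If a projectional skeleton satisfies (iii') and (v) and its induced subspace is `r`-norming
for some `r ≥ 1`, then `Λ' = {λ : ‖P λ‖ ≤ r}` is a closed cofinal subset of `Λ`. -/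
theorem norming_gives_closed_cofinal {X : Type*} [NormedAddCommGroup X] [NormedSpace ℝ X]
    [CompleteSpace X] {Λ : Type*} [PartialOrder Λ] (P : Λ → X →L[ℝ] X)
    (hsk : IsProjSkeleton P)
    (hiii' : ∀ l : ℕ → Λ, Monotone l → ∀ s : Λ, IsLUB (Set.range l) s →
      ∀ x : X, Filter.Tendsto (fun n : ℕ => P (l n) x) Filter.atTop (nhds (P s x)))
    (hv : ∃ C : ℝ, ∀ l : Λ, ‖P l‖ ≤ C)
    (r : ℝ) (hr : 1 ≤ r) (hnorm : IsNorming (inducedSubspace P) r) :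
    (∀ l : Λ, ∃ m : Λ, l ≤ m ∧ m ∈ {l' : Λ | ‖P l'‖ ≤ r}) ∧
    (∀ l : ℕ → Λ, Monotone l → (∀ n : ℕ, l n ∈ {l' : Λ | ‖P l'‖ ≤ r}) →
      ∀ s : Λ, IsLUB (Set.range l) s → s ∈ {l' : Λ | ‖P l'‖ ≤ r}) := by
  have hr0 : (0 : ℝ) ≤ r := le_trans zero_le_one hr
  constructor
  · -- Cofinality
    intro l
    -- iterate the one-step construction
    let F : Λ → Λ := fun a => (aux_step hsk r hr hnorm a).choose
    have hF : ∀ a : Λ, a ≤ F a ∧ ∃ u : ℕ → X,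
        (Set.range (P a) : Set X) ⊆ closure (Set.range u) ∧
        ∀ k m : ℕ, ∃ μ : Λ, ∃ g : StrongDual ℝ X, μ ≤ F a ∧
          ‖g.comp (P μ)‖ ≤ 1 ∧ ‖u k‖ ≤ r * |g (P μ (u k))| + 1 / (m + 1) :=
      fun a => (aux_step hsk r hr hnorm a).choose_spec
    let seq : ℕ → Λ := fun n => F^[n] l
    have hseq_succ : ∀ n : ℕ, seq (n + 1) = F (seq n) := fun n =>
      Function.iterate_succ_apply' F n l
    have hmono : Monotone seq := monotone_nat_of_le_succ fun n => by
      rw [hseq_succ]; exact (hF (seq n)).1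
    obtain ⟨s, hlub, hrange⟩ := hsk.sup_seq seq hmono
    have hseqs : ∀ n, seq n ≤ s := fun n => hlub.1 ⟨n, rfl⟩
    refine ⟨s, hseqs 0, ?_⟩
    -- show ‖P s‖ ≤ r
    refine ContinuousLinearMap.opNorm_le_bound _ hr0 fun x => ?_
    refine le_of_forall_pos_le_add fun ε hε => ?_
    set δ : ℝ := ε / (2 * r + 3) with hδdef
    have hδpos : 0 < δ := by positivity
    have hδε : 2 * r * δ + 3 * δ = ε := by
      rw [hδdef]; field_simp
    -- approximate P s x from the union of ranges
    have hmem : P s x ∈ closure (⋃ n : ℕ, (Set.range (P (seq n)) : Set X)) := by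
      rw [← hrange]; exact mem_range_self x
    obtain ⟨y, hy, hdy⟩ := Metric.mem_closure_iff.1 hmem δ hδpos
    obtain ⟨n, hyn⟩ := mem_iUnion.1 hy
    obtain ⟨u, husub, hukm⟩ := (hF (seq n)).2
    have hyu : y ∈ closure (Set.range u) := husub hyn
    obtain ⟨z, hz, hdz⟩ := Metric.mem_closure_iff.1 hyu δ hδpos
    obtain ⟨k, rfl⟩ := hz
    obtain ⟨m, hm⟩ := exists_nat_one_div_lt hδpos
    obtain ⟨μ, g, hμle, hg1, hgu⟩ := hukm k m
    set f : StrongDual ℝ X := g.comp (P μ) with hfdef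
    have hμs : μ ≤ s := le_trans hμle (by rw [← hseq_succ]; exact hseqs (n + 1))
    -- key identity : f (P s x) = f x
    have hkey : f (P s x) = f x := by
      have := hsk.comp_le μ s hμs
      calc f (P s x) = g (((P μ).comp (P s)) x) := rfl
        _ = g (P μ x) := by rw [this]
        _ = f x := rfl
    -- distance estimates
    have hd1 : ‖P s x - y‖ < δ := by rwa [← dist_eq_norm]
    have hd2 : ‖y - u k‖ < δ := by rwa [← dist_eq_norm]
    have hd3 : ‖P s x - u k‖ < 2 * δ := by
      calc ‖P s x - u k‖ ≤ ‖P s x - y‖ + ‖y - u k‖ := norm_sub_le_norm_sub_add_norm_sub _ _ _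
        _ < 2 * δ := by linarith
    -- functional estimates
    have hfx : |f x| ≤ ‖x‖ := by
      calc |f x| = ‖f x‖ := (Real.norm_eq_abs _).symm
        _ ≤ ‖f‖ * ‖x‖ := f.le_opNorm x
        _ ≤ 1 * ‖x‖ := mul_le_mul_of_nonneg_right hg1 (norm_nonneg x)
        _ = ‖x‖ := one_mul _
    have hfd : |f (u k) - f (P s x)| ≤ 2 * δ := by
      have h1 : f (u k) - f (P s x) = f (u k - P s x) := by rw [map_sub]
      calc |f (u k) - f (P s x)| = ‖f (u k - P s x)‖ := by
            rw [h1, Real.norm_eq_abs]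
        _ ≤ ‖f‖ * ‖u k - P s x‖ := f.le_opNorm _
        _ ≤ 1 * ‖u k - P s x‖ := mul_le_mul_of_nonneg_right hg1 (norm_nonneg _)
        _ = ‖u k - P s x‖ := one_mul _
        _ = ‖P s x - u k‖ := norm_sub_rev _ _
        _ ≤ 2 * δ := le_of_lt hd3
    have hfu : |f (u k)| ≤ ‖x‖ + 2 * δ := by
      have habs : |f (u k)| - |f (P s x)| ≤ |f (u k) - f (P s x)| :=
        abs_sub_abs_le_abs_sub _ _
      have hPsx' : |f (P s x)| ≤ ‖x‖ := by rw [hkey]; exact hfx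
      linarith
    have hfuk_eq : |g (P μ (u k))| = |f (u k)| := rfl
    have hnorm_uk : ‖u k‖ ≤ r * |f (u k)| + δ := by
      rw [← hfuk_eq]; linarith [hgu, hm]
    have hPsx : ‖P s x‖ ≤ ‖u k‖ + 2 * δ := by
      have := norm_sub_norm_le (P s x) (u k); linarith
    have hmul : r * |f (u k)| ≤ r * (‖x‖ + 2 * δ) :=
      mul_le_mul_of_nonneg_left hfu hr0
    have : ‖P s x‖ ≤ r * ‖x‖ + (2 * r * δ + 3 * δ) := by nlinarith
    linarith
  · -- Closedness
    intro l hmonol hbound s hlub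
    show ‖P s‖ ≤ r
    refine ContinuousLinearMap.opNorm_le_bound _ hr0 fun x => ?_
    have htend := hiii' l hmonol s hlub x
    refine le_of_tendsto htend.norm (Filter.Eventually.of_forall fun n => ?_)
    calc ‖P (l n) x‖ ≤ ‖P (l n)‖ * ‖x‖ := (P (l n)).le_opNorm x
      _ ≤ r * ‖x‖ := mul_le_mul_of_nonneg_right (hbound n) (norm_nonneg x)
end

section
/- Every Vašák Banach space is weakly Lindelöf: if X is a real Banach space for which there exist a separable metric space Σ and a usc-K map φ : Σ → X (with respect to the weak topology of X) which is onto X, then X equipped with its weak topology is a Lindelöf topological space (every open cover has a countable subcover). -/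
open Set Topology Filter

/-- The weak topology `σ(X, X*)` on a normed space `X`: the topology induced by all
continuous linear functionals on `X`. -/
def weakTop (X : Type*) [NormedAddCommGroup X] [NormedSpace ℝ X] : TopologicalSpace X :=
  TopologicalSpace.induced (fun x (f : StrongDual ℝ X) => f x) Pi.topologicalSpace

/-- A set-valued map `φ : Γ → X` is usc-K (with respect to the weak topology of `X`) if all
its values are nonempty and weakly compact and preimages (in the sense of `φ s ⊆ U`) of weakly
open sets are open. -/
def IsUscK {Γ : Type*} [TopologicalSpace Γ] {X : Type*} [NormedAddCommGroup X]
    [NormedSpace ℝ X] (φ : Γ → Set X) : Prop :=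
  (∀ s, (φ s).Nonempty) ∧ (∀ s, @IsCompact X (weakTop X) (φ s)) ∧
    ∀ U : Set X, IsOpen[weakTop X] U → IsOpen {s | φ s ⊆ U}

/-- Every Vašák Banach space is weakly Lindelöf: `X` with its weak topology is a Lindelöf
topological space. -/
theorem vasak_is_weakly_lindelof {X : Type u} [NormedAddCommGroup X]
    [NormedSpace ℝ X] [CompleteSpace X] (Γ : Type v) [MetricSpace Γ]
    [TopologicalSpace.SeparableSpace Γ] (φ : Γ → Set X) (husck : IsUscK φ)
    (honto : (⋃ s : Γ, φ s) = Set.univ) :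
    @LindelofSpace X (weakTop X) := by
  letI : TopologicalSpace X := weakTop X
  obtain ⟨hne, hcpt, husc⟩ := husck
  haveI : SecondCountableTopology Γ := UniformSpace.secondCountable_of_separable Γ
  constructor
  rw [isLindelof_iff_countable_subcover]
  intro ι U hU hcov
  have hsub : ∀ s, φ s ⊆ ⋃ i, U i := fun s =>
    (subset_iUnion (fun s : Γ => φ s) s).trans (honto ▸ hcov)
  choose t ht using fun s => (hcpt s).elim_finite_subcover U hU (hsub s)
  -- W s is open and contains s
  have hWopen : ∀ s : Γ, IsOpen {r | φ r ⊆ ⋃ i ∈ t s, U i} := fun s =>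
    husc _ (isOpen_biUnion fun i _ => hU i)
  have hWcov : (Set.univ : Set Γ) ⊆ ⋃ s, {r | φ r ⊆ ⋃ i ∈ t s, U i} := fun r _ =>
    mem_iUnion.2 ⟨r, ht r⟩
  obtain ⟨c, hccount, hcsub⟩ := (isLindelof_univ_iff.2 inferInstance).elim_countable_subcover
    (fun s => {r | φ r ⊆ ⋃ i ∈ t s, U i}) hWopen hWcov
  refine ⟨⋃ s ∈ c, (t s : Set ι), hccount.biUnion fun s _ => (t s).countable_toSet, ?_⟩
  intro x _
  have hx : x ∈ ⋃ s : Γ, φ s := honto ▸ mem_univ x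
  obtain ⟨r, hr⟩ := mem_iUnion.1 hx
  obtain ⟨s, hs, hrs⟩ := mem_iUnion₂.1 (hcsub (mem_univ r))
  obtain ⟨i, hi, hxi⟩ := mem_iUnion₂.1 (hrs hr)
  exact mem_iUnion₂.2 ⟨i, mem_iUnion₂.2 ⟨s, hs, hi⟩, hxi⟩
end

section
/- Let X be a real Banach space. Suppose there is a sequence (A_n)_{n∈ℕ} of weak* compact subsets of X** such that for every x ∈ X and every x** ∈ X** \ j[X] there is n ∈ ℕ with j(x) ∈ A_n and x** ∉ A_n. Then there exist a family (F_s) of weak* compact subsets of X**, indexed by finite nonempty sequences s of natural numbers, and a set Σ ⊆ ℕ^ℕ of infinite sequences of natural numbers, such that j[X] = ⋃_{α∈Σ} ⋂_{k≥1} F_{(α(1),…,α(k))}. -/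
open Set Topology Filter

/-- The weak* topology `σ(X**, X*)` on the bidual of a normed space `X`: the topology induced
by the evaluations at elements of `X*`. -/
noncomputable def weakStarTop (X : Type*) [NormedAddCommGroup X] [NormedSpace ℝ X] :
    TopologicalSpace (StrongDual ℝ (StrongDual ℝ X)) :=
  TopologicalSpace.induced
    (fun F (f : StrongDual ℝ X) => F f) Pi.topologicalSpace

section aux

variable {X : Type u} [NormedAddCommGroup X] [NormedSpace ℝ X]

/-- `vG A 0 = univ`, `vG A (n+1) = A n`. -/
private def vG (A : ℕ → Set (StrongDual ℝ (StrongDual ℝ X))) :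
    ℕ → Set (StrongDual ℝ (StrongDual ℝ X))
  | 0 => Set.univ
  | n + 1 => A n

private def vF (A : ℕ → Set (StrongDual ℝ (StrongDual ℝ X))) (s : List ℕ) :
    Set (StrongDual ℝ (StrongDual ℝ X)) :=
  Metric.closedBall (0 : StrongDual ℝ (StrongDual ℝ X)) (s.headI : ℝ) ∩
    ⋂ n ∈ s.tail, vG A n

open scoped Classical in
private noncomputable def vAlpha (A : ℕ → Set (StrongDual ℝ (StrongDual ℝ X)))
    (x : X) : ℕ → ℕ
  | 0 => ⌈‖NormedSpace.inclusionInDoubleDual ℝ X x‖⌉₊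
  | k + 1 => if NormedSpace.inclusionInDoubleDual ℝ X x ∈ A k then k + 1 else 0

private lemma isCompact_weakStar_iff (s : Set (WeakDual ℝ (StrongDual ℝ X))) :
    @IsCompact _ (weakStarTop X) s ↔ IsCompact s := Iff.rfl

private lemma isClosed_weakStar_iff (s : Set (WeakDual ℝ (StrongDual ℝ X))) :
    @IsClosed _ (weakStarTop X) s ↔ IsClosed s := Iff.rfl

private lemma isCompact_ball_weakStar (r : ℝ) :
    @IsCompact _ (weakStarTop X)
      (Metric.closedBall (0 : StrongDual ℝ (StrongDual ℝ X)) r) :=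
  WeakDual.isCompact_closedBall (𝕜 := ℝ) (E := StrongDual ℝ X) 0 r

end aux

/-- If there is a sequence `(A n)` of weak* compact subsets of `X**` separating the points of
`j[X]` from the points of `X** \ j[X]`, then `j[X]` can be written as
`⋃_{α ∈ Σ} ⋂_{k ≥ 1} F (α(1), …, α(k))` for a family `(F s)` of weak* compact subsets of `X**`
indexed by finite nonempty sequences of natural numbers and a set `Σ ⊆ ℕ^ℕ`. -/
theorem vasak_condition_one_implies_two {X : Type u} [NormedAddCommGroup X] [NormedSpace ℝ X]
    [CompleteSpace X]
    (A : ℕ → Set (StrongDual ℝ (StrongDual ℝ X)))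
    (hA : ∀ n : ℕ, @IsCompact _ (weakStarTop X) (A n))
    (hsep : ∀ (x : X) (F : StrongDual ℝ (StrongDual ℝ X)),
      F ∉ Set.range (NormedSpace.inclusionInDoubleDual ℝ X) →
      ∃ n : ℕ, NormedSpace.inclusionInDoubleDual ℝ X x ∈ A n ∧ F ∉ A n) :
    ∃ (F : List ℕ → Set (StrongDual ℝ (StrongDual ℝ X))) (S : Set (ℕ → ℕ)),
      (∀ s : List ℕ, s ≠ [] → @IsCompact _ (weakStarTop X) (F s)) ∧
      Set.range (NormedSpace.inclusionInDoubleDual ℝ X) =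
        ⋃ α ∈ S, ⋂ k : ℕ, F (List.ofFn (fun i : Fin (k + 1) => α i)) := by
  classical
  have hGclosed : ∀ n, @IsClosed (WeakDual ℝ (StrongDual ℝ X))
      inferInstance (vG A n) := by
    intro n
    cases n with
    | zero => exact isClosed_univ
    | succ m => exact ((isCompact_weakStar_iff (A m)).1 (hA m)).isClosed
  refine ⟨vF A, Set.range (vAlpha A), ?_, ?_⟩
  · intro s hs
    refine (isCompact_weakStar_iff _).2 ?_
    exact ((isCompact_weakStar_iff _).1 (isCompact_ball_weakStar (s.headI : ℝ))).inter_right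
      (isClosed_biInter fun n _ => hGclosed n)
  · ext y
    constructor
    · rintro ⟨x, rfl⟩
      set jx := NormedSpace.inclusionInDoubleDual ℝ X x with hjx
      refine Set.mem_iUnion₂.2 ⟨vAlpha A x, ⟨x, rfl⟩, Set.mem_iInter.2 fun k => ?_⟩
      constructor
      · have h1 : (List.ofFn fun i : Fin (k + 1) => vAlpha A x i).headI = vAlpha A x 0 := by
          rw [List.ofFn_succ]; rfl
        rw [h1]
        simp only [Metric.mem_closedBall, dist_zero_right]
        show dist jx 0 ≤ ((⌈‖jx‖⌉₊ : ℕ) : ℝ)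
        exact (dist_zero_right jx).le.trans (Nat.le_ceil _)
      · refine Set.mem_iInter₂.2 fun m hm => ?_
        have h2 : (List.ofFn fun i : Fin (k + 1) => vAlpha A x i).tail
            = List.ofFn fun i : Fin k => vAlpha A x (i + 1) := by
          rw [List.ofFn_succ]; rfl
        rw [h2] at hm
        obtain ⟨i, hi⟩ := List.mem_ofFn.1 hm
        subst hi
        show jx ∈ vG A (vAlpha A x ((i : ℕ) + 1))
        by_cases hxA : jx ∈ A i
        · have hv : vAlpha A x ((i : ℕ) + 1) = (i : ℕ) + 1 := by
            rw [vAlpha]; exact if_pos hxA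
          rw [hv]
          exact hxA
        · have hv : vAlpha A x ((i : ℕ) + 1) = 0 := by
            rw [vAlpha]; exact if_neg hxA
          rw [hv]
          trivial
    · intro hy
      obtain ⟨a, ⟨x, rfl⟩, hmem⟩ := Set.mem_iUnion₂.1 hy
      by_contra hyj
      obtain ⟨n, hxn, hyn⟩ := hsep x y hyj
      have hk := Set.mem_iInter.1 hmem (n + 1)
      have h2 : (List.ofFn fun i : Fin (n + 1 + 1) => vAlpha A x i).tail
          = List.ofFn fun i : Fin (n + 1) => vAlpha A x (i + 1) := by
        rw [List.ofFn_succ]; rfl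
      have hmem2 := hk.2
      rw [h2] at hmem2
      have hin : vAlpha A x (n + 1) ∈ List.ofFn fun i : Fin (n + 1) => vAlpha A x (i + 1) :=
        List.mem_ofFn.2 ⟨⟨n, Nat.lt_succ_self n⟩, rfl⟩
      have hyG := Set.mem_iInter₂.1 hmem2 _ hin
      have hv : vAlpha A x (n + 1) = n + 1 := by
        rw [vAlpha]; exact if_pos hxn
      rw [hv] at hyG
      exact hyn hyG
end

section
/- Let X be a real Banach space. Suppose there exist a family (F_s) of weak* compact subsets of X**, indexed by finite nonempty sequences s of natural numbers, and a set Σ ⊆ ℕ^ℕ of infinite sequences of natural numbers, such that j[X] = ⋃_{α∈Σ} ⋂_{k≥1} F_{(α(1),…,α(k))}. Then X is Vašák: there exist a separable metric space Σ' and a usc-K map φ : Σ' → X (with respect to the weak topology of X) which is onto X. -/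
open Set Topology Filter

/-- The weak topology on `X` is induced by the canonical embedding into the bidual
equipped with the weak* topology. -/
theorem weakTop_eq_induced (X : Type*) [NormedAddCommGroup X] [NormedSpace ℝ X] :
    weakTop X = (weakStarTop X).induced (NormedSpace.inclusionInDoubleDual ℝ X) := by
  rw [weakStarTop, induced_compose]
  rfl

/-- The weak* topology is Hausdorff. -/
theorem t2Space_weakStarTop (X : Type*) [NormedAddCommGroup X] [NormedSpace ℝ X] :
    @T2Space _ (weakStarTop X) := by
  letI := weakStarTop X
  have hemb : IsEmbedding
      (fun (F : StrongDual ℝ (StrongDual ℝ X)) (f : StrongDual ℝ X) => F f) :=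
    ⟨⟨rfl⟩, fun F G h => DFunLike.coe_injective (funext fun f => congrFun h f)⟩
  exact hemb.t2Space

/-- If `j[X] = ⋃_{α ∈ Σ} ⋂_{k ≥ 1} F (α(1), …, α(k))` for a family `(F s)` of weak* compact
subsets of `X**` indexed by finite nonempty sequences of natural numbers and a set `Σ ⊆ ℕ^ℕ`,
then `X` is Vašák: there is a separable metric space `Γ` and a usc-K map `φ : Γ → X` (with
respect to the weak topology of `X`) which is onto `X`. -/
theorem vasak_condition_two_implies_three {X : Type u} [NormedAddCommGroup X] [NormedSpace ℝ X]
    [CompleteSpace X]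
    (F : List ℕ → Set (StrongDual ℝ (StrongDual ℝ X))) (S : Set (ℕ → ℕ))
    (hF : ∀ s : List ℕ, s ≠ [] → @IsCompact _ (weakStarTop X) (F s))
    (hrep : Set.range (NormedSpace.inclusionInDoubleDual ℝ X) =
      ⋃ α ∈ S, ⋂ k : ℕ, F (List.ofFn (fun i : Fin (k + 1) => α i))) :
    ∃ (Γ : Type) (_ : MetricSpace Γ) (_ : TopologicalSpace.SeparableSpace Γ)
      (φ : Γ → Set X), IsUscK φ ∧ (⋃ s : Γ, φ s) = Set.univ := by
  classical
  letI tS : TopologicalSpace (StrongDual ℝ (StrongDual ℝ X)) := weakStarTop X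
  haveI : T2Space (StrongDual ℝ (StrongDual ℝ X)) := t2Space_weakStarTop X
  set ι : X → StrongDual ℝ (StrongDual ℝ X) :=
    ⇑(NormedSpace.inclusionInDoubleDual ℝ X) with hιdef
  have hne : ∀ (α : ℕ → ℕ) (k : ℕ), (List.ofFn fun i : Fin (k + 1) => α i) ≠ [] := by
    intro α k h
    simpa using congrArg List.length h
  set K : (ℕ → ℕ) → Set (StrongDual ℝ (StrongDual ℝ X)) :=
    fun α => ⋂ k : ℕ, F (List.ofFn fun i : Fin (k + 1) => α i) with hKdef
  have hKsub : ∀ α ∈ S, K α ⊆ Set.range ι := by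
    intro α hα
    rw [hrep]
    exact subset_iUnion₂ (s := fun α _ => K α) α hα
  have hKcomp : ∀ α, IsCompact (K α) := by
    intro α
    exact IsCompact.of_isClosed_subset (hF _ (hne α 0))
      (isClosed_iInter fun k => (hF _ (hne α k)).isClosed) (iInter_subset _ 0)
  have hInd : @Topology.IsInducing X (StrongDual ℝ (StrongDual ℝ X)) (weakTop X) tS ι :=
    @Topology.IsInducing.mk X (StrongDual ℝ (StrongDual ℝ X)) (weakTop X) tS ι
      (weakTop_eq_induced X)
  letI : MetricSpace (ℕ → ℕ) := PiNat.metricSpaceNatNat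
  haveI : SecondCountableTopology (ℕ → ℕ) := by
    have : PiNat.metricSpaceNatNat.toUniformSpace.toTopologicalSpace =
        (Pi.topologicalSpace : TopologicalSpace (ℕ → ℕ)) := rfl
    exact inferInstance
  refine ⟨{α : ℕ → ℕ // α ∈ S ∧ (K α).Nonempty}, inferInstance, inferInstance,
    fun γ => ι ⁻¹' K γ.1, ⟨?_, ?_, ?_⟩, ?_⟩
  · -- nonempty
    rintro ⟨α, hαS, x, hx⟩
    obtain ⟨y, rfl⟩ := hKsub α hαS hx
    exact ⟨y, hx⟩
  · -- weakly compact
    rintro ⟨α, hαS, hαne⟩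
    rw [@Topology.IsInducing.isCompact_iff X (StrongDual ℝ (StrongDual ℝ X))
      (weakTop X) tS _ ι hInd, Set.image_preimage_eq_inter_range,
      Set.inter_eq_left.2 (hKsub α hαS)]
    exact hKcomp α
  · -- usc
    intro U hU
    rw [weakTop_eq_induced] at hU
    obtain ⟨W, hW, rfl⟩ := hU
    rw [Metric.isOpen_iff]
    rintro ⟨α, hαS, hαne⟩ hγ
    simp only [Set.mem_setOf_eq] at hγ
    have hKW : K α ⊆ W := by
      intro x hx
      obtain ⟨y, rfl⟩ := hKsub α hαS hx
      exact hγ hx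
    have hempty : F (List.ofFn fun i : Fin 1 => α i) ∩
        ⋂ k : ℕ, (F (List.ofFn fun i : Fin (k + 1) => α i) ∩ Wᶜ) = ∅ := by
      apply Set.eq_empty_of_subset_empty
      rintro x ⟨-, hx2⟩
      simp only [Set.mem_iInter, Set.mem_inter_iff] at hx2
      exact (hx2 0).2 (hKW (Set.mem_iInter.2 fun k => (hx2 k).1))
    obtain ⟨t, ht⟩ := (hF _ (hne α 0)).elim_finite_subfamily_closed
      (fun k : ℕ => F (List.ofFn fun i : Fin (k + 1) => α i) ∩ Wᶜ)
      (fun k => ((hF _ (hne α k)).isClosed).inter hW.isClosed_compl) hempty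
    set n : ℕ := t.sup id with hn
    refine ⟨(1 / 2 : ℝ) ^ n, by positivity, ?_⟩
    rintro ⟨β, hβS, hβne⟩ hβd
    rw [Metric.mem_ball, Subtype.dist_eq] at hβd
    have hβα : ∀ i ≤ n, β i = α i := fun i hi => PiNat.apply_eq_of_dist_lt hβd hi
    simp only [Set.mem_setOf_eq]
    have hKβW : K β ⊆ W := by
      intro x hx
      by_contra hxW
      have hxk : ∀ k, x ∈ F (List.ofFn fun i : Fin (k + 1) => β i) :=
        Set.mem_iInter.1 hx
      have hxempty : x ∈ F (List.ofFn fun i : Fin 1 => α i) ∩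
          ⋂ k ∈ t, (F (List.ofFn fun i : Fin (k + 1) => α i) ∩ Wᶜ) := by
        constructor
        · have h0 : (List.ofFn fun i : Fin 1 => β i) = (List.ofFn fun i : Fin 1 => α i) := by
            congr 1
            funext i
            exact hβα i (le_trans (Nat.lt_succ_iff.1 i.2) (Nat.zero_le n))
          rw [← h0]
          exact hxk 0
        · refine Set.mem_iInter₂.2 fun k hk => ⟨?_, hxW⟩
          have hkn : k ≤ n := hn ▸ Finset.le_sup (f := id) hk
          have hk' : (List.ofFn fun i : Fin (k + 1) => β i) =
              (List.ofFn fun i : Fin (k + 1) => α i) := by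
            congr 1
            funext i
            exact hβα i (le_trans (Nat.lt_succ_iff.1 i.2) hkn)
          rw [← hk']
          exact hxk k
      rw [ht] at hxempty
      exact hxempty
    intro x hx
    exact hKβW hx
  · -- union is everything
    ext x
    simp only [Set.mem_iUnion, Set.mem_univ, iff_true]
    have hx : ι x ∈ Set.range ι := Set.mem_range_self x
    rw [hrep] at hx
    obtain ⟨α, hαS, hαx⟩ := Set.mem_iUnion₂.1 hx
    exact ⟨⟨α, hαS, ⟨ι x, hαx⟩⟩, hαx⟩
end

section
/- Let X be a real Banach space which is Vašák, i.e., there exist a separable metric space Σ and a usc-K map φ : Σ → X (with respect to the weak topology of X) which is onto X. Then there is a sequence (A_n)_{n∈ℕ} of weak* compact subsets of X** such that for every x ∈ X and every x** ∈ X** \ j[X] there is n ∈ ℕ with j(x) ∈ A_n and x** ∉ A_n. -/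
open Set Topology Filter NormedSpace

open NormedSpace in
lemma weakStarTop_eq (X : Type*) [NormedAddCommGroup X] [NormedSpace ℝ X] :
    weakStarTop X = (instTopologicalSpaceWeakDual ℝ (StrongDual ℝ X) : TopologicalSpace (WeakDual ℝ (StrongDual ℝ X))) :=
  rfl

open NormedSpace in
lemma weakTop_eq_induced_s6 (X : Type*) [NormedAddCommGroup X] [NormedSpace ℝ X] :
    weakTop X = TopologicalSpace.induced
      (fun x => (inclusionInDoubleDual ℝ X x : WeakDual ℝ (StrongDual ℝ X)))
      (instTopologicalSpaceWeakDual ℝ (StrongDual ℝ X)) := by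
  rw [show (instTopologicalSpaceWeakDual ℝ (StrongDual ℝ X) : TopologicalSpace (WeakDual ℝ (StrongDual ℝ X)))
      = weakStarTop X from rfl]
  unfold weakStarTop weakTop
  rw [induced_compose]
  rfl

open NormedSpace in
lemma continuous_jW (X : Type*) [NormedAddCommGroup X] [NormedSpace ℝ X] :
    @Continuous X (WeakDual ℝ (StrongDual ℝ X)) (weakTop X) _
      (fun x => (inclusionInDoubleDual ℝ X x : WeakDual ℝ (StrongDual ℝ X))) := by
  rw [weakTop_eq_induced_s6]
  exact continuous_induced_dom

lemma sep_lemma {Y : Type*} [TopologicalSpace Y] [T1Space Y] [RegularSpace Y] {K : Set Y}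
    (hK : IsCompact K) {G : Y} (hG : G ∉ K) :
    ∃ U, IsOpen U ∧ K ⊆ U ∧ G ∉ closure U := by
  obtain ⟨V, hVo, hKV, hVc⟩ := hK.exists_isOpen_closure_subset
    (U := {G}ᶜ) (isOpen_compl_singleton.mem_nhdsSet.mpr
      (fun y hy (h : y = G) => hG (h ▸ hy)))
  exact ⟨V, hVo, hKV, fun h => (hVc h) rfl⟩

/-- If `X` is Vašák, witnessed by a separable metric space `Γ` and a usc-K map `φ : Γ → X`
onto `X`, then there is a sequence `(A n)` of weak* compact subsets of `X**` such that for
every `x ∈ X` and every `x** ∈ X** \ j[X]` there is `n` with `j x ∈ A n` and `x** ∉ A n`. -/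
theorem vasak_condition_three_implies_one {X : Type u} [NormedAddCommGroup X] [NormedSpace ℝ X]
    [CompleteSpace X] (Γ : Type v) [MetricSpace Γ] [TopologicalSpace.SeparableSpace Γ]
    (φ : Γ → Set X) (husck : IsUscK φ) (honto : (⋃ s : Γ, φ s) = Set.univ) :
    ∃ A : ℕ → Set (StrongDual ℝ (StrongDual ℝ X)),
      (∀ n : ℕ, @IsCompact _ (weakStarTop X) (A n)) ∧
      ∀ (x : X) (G : StrongDual ℝ (StrongDual ℝ X)),
        G ∉ Set.range (NormedSpace.inclusionInDoubleDual ℝ X) →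
        ∃ n : ℕ, NormedSpace.inclusionInDoubleDual ℝ X x ∈ A n ∧ G ∉ A n := by
  haveI : SecondCountableTopology Γ := UniformSpace.secondCountable_of_separable Γ
  obtain ⟨b, hbc, -, hbB⟩ := TopologicalSpace.exists_countable_basis Γ
  obtain ⟨V, hV⟩ := (hbc.insert ∅).exists_eq_range (insert_nonempty _ _)
  set j : X → WeakDual ℝ (StrongDual ℝ X) := fun x => inclusionInDoubleDual ℝ X x with hj
  set S : ℕ → Set (WeakDual ℝ (StrongDual ℝ X)) :=
    fun i => closure (j '' ⋃ t ∈ V i, φ t) with hS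
  refine ⟨fun n => S n.unpair.1 ∩
      (WeakDual.toStrongDual ⁻¹' Metric.closedBall 0 (n.unpair.2 : ℝ)), fun n => ?_, ?_⟩
  · show IsCompact (_ : Set (WeakDual ℝ (StrongDual ℝ X)))
    have hball : IsCompact
        (WeakDual.toStrongDual ⁻¹' Metric.closedBall (0 : StrongDual ℝ (StrongDual ℝ X)) (n.unpair.2 : ℝ)) :=
      WeakDual.isCompact_closedBall 0 _
    exact hball.of_isClosed_subset (isClosed_closure.inter hball.isClosed) inter_subset_right
  · intro x G hG
    have hx : x ∈ ⋃ s, φ s := honto ▸ mem_univ x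
    obtain ⟨s, hs⟩ := mem_iUnion.1 hx
    have hKc : IsCompact (j '' φ s) := @IsCompact.image X (WeakDual ℝ (StrongDual ℝ X)) (weakTop X) _ (φ s) j (husck.2.1 s) (continuous_jW X)
    have hGK : G ∉ j '' φ s := by
      rintro ⟨y, -, hy⟩
      exact hG ⟨y, hy⟩
    obtain ⟨U, hUo, hKU, hGU⟩ := sep_lemma hKc hGK
    have hU' : IsOpen[weakTop X] (j ⁻¹' U) := @Continuous.isOpen_preimage X (WeakDual ℝ (StrongDual ℝ X)) (weakTop X) _ j (continuous_jW X) U hUo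
    have hφsU : s ∈ {t | φ t ⊆ j ⁻¹' U} := fun y hy => hKU (mem_image_of_mem j hy)
    obtain ⟨W, hWb, hsW, hWsub⟩ :=
      hbB.exists_subset_of_mem_open hφsU (husck.2.2 _ hU')
    obtain ⟨i, hi⟩ : W ∈ range V := hV ▸ mem_insert_of_mem _ hWb
    refine ⟨Nat.pair i ⌈‖x‖⌉₊, ⟨?_, ?_⟩, ?_⟩
    · show (j x : WeakDual ℝ (StrongDual ℝ X)) ∈ S (Nat.pair i ⌈‖x‖⌉₊).unpair.1
      rw [Nat.unpair_pair]
      exact subset_closure (mem_image_of_mem j (mem_biUnion (hi ▸ hsW) hs))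
    · show inclusionInDoubleDual ℝ X x ∈ Metric.closedBall (0 : StrongDual ℝ (StrongDual ℝ X)) _
      rw [Nat.unpair_pair]
      rw [Metric.mem_closedBall]
      refine (dist_zero_right (inclusionInDoubleDual ℝ X x : StrongDual ℝ (StrongDual ℝ X))).le.trans ?_
      exact (double_dual_bound ℝ X x).trans (Nat.le_ceil _)
    · rintro ⟨h1, -⟩
      rw [show (Nat.pair i ⌈‖x‖⌉₊).unpair.1 = i from by rw [Nat.unpair_pair]] at h1
      have hsub : S i ⊆ closure U := by
        apply closure_mono
        rintro z ⟨y, hy, rfl⟩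
        obtain ⟨t, htW, hyt⟩ := mem_iUnion₂.1 hy
        exact hWsub (hi ▸ htW) hyt
      exact hGU (hsub h1)
end

section
/- Let X be a real Banach space and (P_λ)_{λ∈Λ} a projectional skeleton on X satisfying moreover sup_{λ∈Λ} ‖P_λ‖ < ∞. Then condition (iii) can be strengthened to (iii'): for every increasing sequence (λ_n) in Λ with supremum λ ∈ Λ, one has P_λ x = lim_{n→∞} P_{λ_n} x (in norm) for every x ∈ X. -/
open Set Topology Filter

/-- If a projectional skeleton satisfies (v) `sup ‖P λ‖ < ∞`, then condition (iii) can be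
strengthened to (iii'): for every increasing sequence with supremum `s`,
`P s x = lim P (l n) x` for every `x`. -/
theorem skeleton_bounded_implies_pointwise_convergence {X : Type*} [NormedAddCommGroup X]
    [NormedSpace ℝ X] [CompleteSpace X] {Λ : Type*} [PartialOrder Λ] (P : Λ → X →L[ℝ] X)
    (hsk : IsProjSkeleton P) (hv : ∃ C : ℝ, ∀ l : Λ, ‖P l‖ ≤ C) :
    ∀ l : ℕ → Λ, Monotone l → ∀ s : Λ, IsLUB (Set.range l) s →
      ∀ x : X, Filter.Tendsto (fun n : ℕ => P (l n) x) Filter.atTop (nhds (P s x)) := by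

  intro l hl s hs x
  obtain ⟨C, hC⟩ := hv
  have hC' : ∀ m : Λ, ‖P m‖ ≤ max C 0 := fun m => (hC m).trans (le_max_left _ _)
  obtain ⟨s', hs', hrange⟩ := hsk.sup_seq l hl
  have hss : s' = s := hs'.unique hs
  subst hss
  rw [Metric.tendsto_atTop]
  intro ε hε
  have hpos : (0:ℝ) < max C 0 + 1 := by positivity
  have hx : P s' x ∈ closure (⋃ n : ℕ, (Set.range (P (l n)) : Set X)) := by
    rw [← hrange]; exact ⟨x, rfl⟩
  rw [Metric.mem_closure_iff] at hx
  obtain ⟨y, hy, hd⟩ := hx (ε / (max C 0 + 1)) (by positivity)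
  obtain ⟨m, hm⟩ := Set.mem_iUnion.mp hy
  obtain ⟨z, hz⟩ := hm
  refine ⟨m, fun n hn => ?_⟩
  have hle : l n ≤ s' := hs.1 ⟨n, rfl⟩
  have h1 : P (l n) (P s' x) = P (l n) x := by
    have h := hsk.comp_le (l n) s' hle
    calc P (l n) (P s' x) = ((P (l n)).comp (P s')) x := rfl
    _ = P (l n) x := by rw [h]
  have h2 : P (l n) y = y := by
    have h := hsk.le_comp (l m) (l n) (hl hn)
    calc P (l n) y = ((P (l n)).comp (P (l m))) z := by rw [← hz]; rfl
    _ = P (l m) z := by rw [h]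
    _ = y := hz
  have key : P (l n) x - P s' x = P (l n) (P s' x - y) + (y - P s' x) := by
    rw [map_sub, h1, h2]; abel
  rw [dist_eq_norm, key]
  calc ‖P (l n) (P s' x - y) + (y - P s' x)‖
      ≤ ‖P (l n) (P s' x - y)‖ + ‖y - P s' x‖ := norm_add_le _ _
    _ ≤ ‖P (l n)‖ * ‖P s' x - y‖ + ‖P s' x - y‖ := by
        rw [norm_sub_rev y]
        exact add_le_add ((P (l n)).le_opNorm _) le_rfl
    _ ≤ (max C 0 + 1) * ‖P s' x - y‖ := by
        rw [add_mul, one_mul]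
        exact add_le_add (mul_le_mul_of_nonneg_right (hC' _) (norm_nonneg _)) le_rfl
    _ < (max C 0 + 1) * (ε / (max C 0 + 1)) := by
        apply mul_lt_mul_of_pos_left _ hpos
        rw [← dist_eq_norm]; exact hd
    _ = ε := mul_div_cancel₀ _ hpos.ne'
end

section
/- Let X be a real Banach space and (P_λ)_{λ∈Λ} a projectional skeleton on X. Then there exists a closed cofinal subset Λ' ⊆ Λ such that sup_{λ∈Λ'} ‖P_λ‖ < ∞. -/
open Set Topology Filter

lemma aux_norm_sup {X : Type*} [NormedAddCommGroup X] [NormedSpace ℝ X]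
    {Λ : Type*} [PartialOrder Λ] {P : Λ → X →L[ℝ] X} (hsk : IsProjSkeleton P)
    (l : ℕ → Λ) (hl : Monotone l) (s : Λ) (hs : IsLUB (Set.range l) s)
    (hr : (Set.range (P s) : Set X) = closure (⋃ n : ℕ, (Set.range (P (l n)) : Set X)))
    (C : ℝ) (hC : 0 ≤ C) (hb : ∀ n, ‖P (l n)‖ ≤ C) : ‖P s‖ ≤ C := by
  apply ContinuousLinearMap.opNorm_le_bound _ hC
  intro z
  have hmem : P s z ∈ closure (⋃ n : ℕ, (Set.range (P (l n)) : Set X)) := by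
    rw [← hr]; exact mem_range_self z
  refine le_of_forall_pos_le_add ?_
  intro ε hε
  have hC1 : (0:ℝ) < 1 + C := by linarith
  have hε' : (0:ℝ) < ε / (1 + C) := div_pos hε hC1
  obtain ⟨y, hy, hdy⟩ := Metric.mem_closure_iff.1 hmem _ hε'
  obtain ⟨_, ⟨n, rfl⟩, hyn⟩ := hy
  obtain ⟨w, rfl⟩ := hyn
  have hidem : P (l n) (P (l n) w) = P (l n) w := by
    have := congrArg (fun T : X →L[ℝ] X => T w) (hsk.idem (l n))
    simpa using this
  have hln : l n ≤ s := hs.1 (mem_range_self n)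
  have hPsz : P (l n) (P s z) = P (l n) z := by
    have := congrArg (fun T : X →L[ℝ] X => T z) (hsk.comp_le (l n) s hln)
    simpa using this
  have hd : ‖P s z - P (l n) w‖ < ε / (1 + C) := by
    simpa [dist_eq_norm] using hdy
  have h1 : ‖P (l n) z - P (l n) w‖ ≤ C * (ε / (1 + C)) := by
    have : P (l n) z - P (l n) w = P (l n) (P s z - P (l n) w) := by
      rw [map_sub, hPsz, hidem]
    rw [this]
    calc ‖P (l n) (P s z - P (l n) w)‖ ≤ ‖P (l n)‖ * ‖P s z - P (l n) w‖ :=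
          (P (l n)).le_opNorm _
      _ ≤ C * (ε / (1 + C)) :=
          mul_le_mul (hb n) hd.le (norm_nonneg _) hC
  have h2 : ‖P (l n) z‖ ≤ C * ‖z‖ :=
    le_trans ((P (l n)).le_opNorm z) (mul_le_mul_of_nonneg_right (hb n) (norm_nonneg _))
  have key : ‖P s z‖ ≤ ε / (1 + C) + C * (ε / (1 + C)) + C * ‖z‖ := by
    calc ‖P s z‖ = ‖(P s z - P (l n) w) + (P (l n) w - P (l n) z) + P (l n) z‖ := by
          congr 1; abel
      _ ≤ ‖P s z - P (l n) w‖ + ‖P (l n) w - P (l n) z‖ + ‖P (l n) z‖ := by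
          exact (norm_add_le _ _).trans (by gcongr; exact norm_add_le _ _)
      _ ≤ ε / (1 + C) + C * (ε / (1 + C)) + C * ‖z‖ := by
          rw [norm_sub_rev (P (l n) w)]
          gcongr
  have : ε / (1 + C) + C * (ε / (1 + C)) = ε := by field_simp
  linarith

/-- Any projectional skeleton admits a closed cofinal subset of indices on which the norms of
the projections are bounded. -/
theorem skeleton_exists_closed_cofinal_bounded {X : Type*} [NormedAddCommGroup X]
    [NormedSpace ℝ X] [CompleteSpace X] {Λ : Type*} [PartialOrder Λ] (P : Λ → X →L[ℝ] X)
    (hsk : IsProjSkeleton P) :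
    ∃ Λ' : Set Λ,
      (∀ l : Λ, ∃ m ∈ Λ', l ≤ m) ∧
      (∀ l : ℕ → Λ, Monotone l → (∀ n : ℕ, l n ∈ Λ') →
        ∀ s : Λ, IsLUB (Set.range l) s → s ∈ Λ') ∧
      (∃ C : ℝ, ∀ l ∈ Λ', ‖P l‖ ≤ C) := by
  -- First find N such that {l | ‖P l‖ ≤ N} is cofinal
  have hcof : ∃ N : ℕ, ∀ l : Λ, ∃ m : Λ, l ≤ m ∧ ‖P m‖ ≤ N := by
    by_contra h
    push_neg at h
    choose a ha using h
    -- build a monotone sequence μ with a n ≤ μ n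
    choose d hd1 hd2 using hsk.directed
    let μ : ℕ → Λ := fun n => Nat.rec (a 0) (fun n p => d p (a (n+1))) n
    have hμmono : Monotone μ := monotone_nat_of_le_succ (fun n => hd1 _ _)
    have hμa : ∀ n, a n ≤ μ n := by
      intro n
      cases n with
      | zero => exact le_refl _
      | succ n => exact hd2 _ _
    obtain ⟨s, hs, -⟩ := hsk.sup_seq μ hμmono
    have hle : ∀ n, a n ≤ s := fun n => (hμa n).trans (hs.1 (mem_range_self n))
    obtain ⟨N, hN⟩ := exists_nat_ge ‖P s‖
    exact absurd hN (not_le.2 (ha N s (hle N)))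
  obtain ⟨N, hN⟩ := hcof
  refine ⟨{l : Λ | ‖P l‖ ≤ N}, fun l => (hN l).imp (fun m hm => ⟨hm.2, hm.1⟩), ?_, ⟨N, fun l hl => hl⟩⟩
  intro l hl hmem s hs
  obtain ⟨s', hs', hr⟩ := hsk.sup_seq l hl
  have : s = s' := hs.unique hs'
  subst this
  exact aux_norm_sup hsk l hl s hs hr N (Nat.cast_nonneg N) hmem
end
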